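/- arXiv:1306.6244 — 9 statements merged into one kernel-verified Lean document; each statement's English description precedes it below -/
import Mathlib

section
/- Let g ∈ U(3) and set T₁ = iσ₁, T₂ = iσ₂, T₃ = iσ₃ (Pauli matrices). Define Uᵢⱼ = gᵢⱼ · (Tᵢ ⊗ Tⱼ) ∈ M₂(ℂ) ⊗ M₂(ℂ) for 1 ≤ i,j ≤ 3. Then: (a) Σₖ Uᵢₖ Uⱼₖ* = δᵢⱼ · 1 and Σₖ Uₖᵢ* Uₖⱼ = δᵢⱼ · 1 (i.e., the 3×3 matrix (Uᵢⱼ) over M₄(ℂ) is unitary), and (b) Uᵢⱼ Uₖₗ = (-1)^{δᵢₖ + δⱼₗ} Uₖₗ Uᵢⱼ for all i,j,k,l. -/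
open Kronecker

lemma starK (A B : Matrix (Fin 2) (Fin 2) ℂ) :
    star (A ⊗ₖ B) = star A ⊗ₖ star B := by
  ext ⟨i,j⟩ ⟨k,l⟩
  simp [Matrix.star_apply, Matrix.kroneckerMap_apply]

theorem stmt_5 (T : Fin 3 → Matrix (Fin 2) (Fin 2) ℂ)
    (h1 : T 0 = Complex.I • !![0, 1; 1, 0])
    (h2 : T 1 = Complex.I • !![0, -Complex.I; Complex.I, 0])
    (h3 : T 2 = Complex.I • !![1, 0; 0, -1])
    (g : Matrix (Fin 3) (Fin 3) ℂ) (hg : g ∈ Matrix.unitaryGroup (Fin 3) ℂ)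
    (U : Fin 3 → Fin 3 → Matrix (Fin 2 × Fin 2) (Fin 2 × Fin 2) ℂ)
    (hU : ∀ i j, U i j = g i j • (T i ⊗ₖ T j)) :
    (∀ i j, ∑ k, U i k * star (U j k) = if i = j then 1 else 0) ∧
    (∀ i j, ∑ k, star (U k i) * U k j = if i = j then 1 else 0) ∧
    (∀ i j k l, U i j * U k l =
      ((-1 : ℂ) ^ ((if i = k then 1 else 0) + (if j = l then 1 else 0) : ℕ)) •
        (U k l * U i j)) := by
  have Tstar : ∀ a, T a * star (T a) = 1 := by
    intro a
    match a with
    | 0 => rw [h1]; ext i j; fin_cases i <;> fin_cases j <;>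
        simp [Matrix.mul_apply, Fin.sum_univ_succ, Complex.ext_iff]
    | 1 => rw [h2]; ext i j; fin_cases i <;> fin_cases j <;>
        simp [Matrix.mul_apply, Fin.sum_univ_succ, Complex.ext_iff]
    | 2 => rw [h3]; ext i j; fin_cases i <;> fin_cases j <;>
        simp [Matrix.mul_apply, Fin.sum_univ_succ, Complex.ext_iff]
  have Tstar' : ∀ a, star (T a) * T a = 1 := by
    intro a
    match a with
    | 0 => rw [h1]; ext i j; fin_cases i <;> fin_cases j <;>
        simp [Matrix.mul_apply, Fin.sum_univ_succ, Complex.ext_iff]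
    | 1 => rw [h2]; ext i j; fin_cases i <;> fin_cases j <;>
        simp [Matrix.mul_apply, Fin.sum_univ_succ, Complex.ext_iff]
    | 2 => rw [h3]; ext i j; fin_cases i <;> fin_cases j <;>
        simp [Matrix.mul_apply, Fin.sum_univ_succ, Complex.ext_iff]
  have commT : ∀ a b, T a * T b = (if a = b then (1:ℂ) else -1) • (T b * T a) := by
    intro a b
    match a, b with
    | 0, 0 => simp
    | 1, 1 => simp
    | 2, 2 => simp
    | 0, 1 => rw [h1, h2]; ext i j; fin_cases i <;> fin_cases j <;>
        simp [Matrix.mul_apply, Fin.sum_univ_succ, Complex.ext_iff]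
    | 1, 0 => rw [h1, h2]; ext i j; fin_cases i <;> fin_cases j <;>
        simp [Matrix.mul_apply, Fin.sum_univ_succ, Complex.ext_iff]
    | 0, 2 => rw [h1, h3]; ext i j; fin_cases i <;> fin_cases j <;>
        simp [Matrix.mul_apply, Fin.sum_univ_succ, Complex.ext_iff]
    | 2, 0 => rw [h1, h3]; ext i j; fin_cases i <;> fin_cases j <;>
        simp [Matrix.mul_apply, Fin.sum_univ_succ, Complex.ext_iff]
    | 1, 2 => rw [h2, h3]; ext i j; fin_cases i <;> fin_cases j <;>
        simp [Matrix.mul_apply, Fin.sum_univ_succ, Complex.ext_iff]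
    | 2, 1 => rw [h2, h3]; ext i j; fin_cases i <;> fin_cases j <;>
        simp [Matrix.mul_apply, Fin.sum_univ_succ, Complex.ext_iff]
  have hrow : ∀ i j, (∑ k, g i k * star (g j k)) = if i = j then (1:ℂ) else 0 := by
    intro i j
    have := congrFun (congrFun hg.2 i) j
    simpa [Matrix.mul_apply, Matrix.one_apply] using this
  have hcol : ∀ i j, (∑ k, star (g k i) * g k j) = if i = j then (1:ℂ) else 0 := by
    intro i j
    have := congrFun (congrFun hg.1 i) j
    simpa [Matrix.mul_apply, Matrix.one_apply] using this
  refine ⟨?_, ?_, ?_⟩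
  · intro i j
    have key : ∀ k, U i k * star (U j k)
        = (g i k * star (g j k)) • ((T i * star (T j)) ⊗ₖ (1 : Matrix (Fin 2) (Fin 2) ℂ)) := by
      intro k
      rw [hU, hU, star_smul, smul_mul_smul_comm, starK, ← Matrix.mul_kronecker_mul, Tstar k]
    simp only [key, ← Finset.sum_smul, hrow i j]
    split
    · next h => subst h; rw [Tstar i, Matrix.one_kronecker_one, one_smul]
    · rw [zero_smul]
  · intro i j
    have key : ∀ k, star (U k i) * U k j
        = (star (g k i) * g k j) • ((1 : Matrix (Fin 2) (Fin 2) ℂ) ⊗ₖ (star (T i) * T j)) := by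
      intro k
      rw [hU, hU, star_smul, smul_mul_smul_comm, starK, ← Matrix.mul_kronecker_mul, Tstar' k]
    simp only [key, ← Finset.sum_smul, hcol i j]
    split
    · next h => subst h; rw [Tstar' i, Matrix.one_kronecker_one, one_smul]
    · rw [zero_smul]
  · intro i j k l
    rw [hU i j, hU k l, smul_mul_smul_comm, ← Matrix.mul_kronecker_mul,
      smul_mul_smul_comm, ← Matrix.mul_kronecker_mul, commT i k, commT j l,
      Matrix.smul_kronecker, Matrix.kronecker_smul]
    simp only [smul_smul]
    congr 1
    split_ifs <;> ring
end

section
/- Let g ∈ SU(3) and let Γ ⊂ SU(3) be the subgroup of diagonal matrices with ±1 entries and determinant 1. Then the set {(s,t) ∈ Γ × Γ : s g t = g} equals {(1,1)} if and only if g has a row with all entries nonzero or a column with all entries nonzero. -/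
/-- The subgroup `Γ ⊂ SU(3)` of diagonal matrices with `±1` entries and determinant `1`,
as a set of matrices. -/
def GammaSet : Set (Matrix (Fin 3) (Fin 3) ℂ) :=
  {s | (∀ i j, i ≠ j → s i j = 0) ∧ (∀ i, s i i = 1 ∨ s i i = -1) ∧ s.det = 1}

lemma gamma_eq_diagonal {s : Matrix (Fin 3) (Fin 3) ℂ} (hs : s ∈ GammaSet) :
    s = Matrix.diagonal (fun i => s i i) := by
  ext a b
  by_cases h : a = b
  · subst h; simp [Matrix.diagonal_apply_eq]
  · rw [Matrix.diagonal_apply_ne _ h]; exact hs.1 a b h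

lemma fin3_third : ∀ j₁ j₂ : Fin 3, j₁ ≠ j₂ →
    ∃ k, k ≠ j₁ ∧ k ≠ j₂ ∧ ∀ b, b ≠ k → b = j₁ ∨ b = j₂ := by decide

lemma fin3_exists_ne : ∀ i : Fin 3, ∃ a : Fin 3, a ≠ i := by decide

lemma sum3_single {f : Fin 3 → ℂ} (j : Fin 3) (hz : ∀ b, b ≠ j → f b = 0) :
    ∑ b, f b = f j := by
  fin_cases j
  · rw [Fin.sum_univ_three, hz 1 (by decide), hz 2 (by decide)]; simp
  · rw [Fin.sum_univ_three, hz 0 (by decide), hz 2 (by decide)]; simp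
  · rw [Fin.sum_univ_three, hz 0 (by decide), hz 1 (by decide)]; simp

/-- Structural lemma: a unitary 3×3 matrix (with det 1) in which every row has a
zero entry has a "cross" zero pattern: some row is zero off a column `j`, and
that column is zero off that row. -/
lemma exists_cross_zero (g : Matrix (Fin 3) (Fin 3) ℂ)
    (hdet : g.det = 1) (hortho : g * g.conjTranspose = 1)
    (hrow : ∀ i, ∃ j, g i j = 0) :
    ∃ i j, (∀ b, b ≠ j → g i b = 0) ∧ (∀ a, a ≠ i → g a j = 0) := by
  have horth : ∀ i a, i ≠ a → ∑ k, g i k * (starRingEnd ℂ) (g a k) = 0 := by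
    intro i a hia
    have h := congrFun (congrFun hortho i) a
    rw [Matrix.mul_apply] at h
    simpa [Matrix.conjTranspose_apply, Matrix.one_apply, hia] using h
  by_cases hA : ∃ i j₁ j₂, j₁ ≠ j₂ ∧ g i j₁ = 0 ∧ g i j₂ = 0
  · obtain ⟨i, j₁, j₂, hne, h1, h2⟩ := hA
    obtain ⟨k, -, -, hk⟩ := fin3_third j₁ j₂ hne
    have hz : ∀ b, b ≠ k → g i b = 0 := by
      intro b hb
      rcases hk b hb with rfl | rfl
      · exact h1
      · exact h2
    refine ⟨i, k, hz, ?_⟩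
    have hnz : g i k ≠ 0 := by
      intro h0
      have : g.det = 0 := Matrix.det_eq_zero_of_row_eq_zero i (fun b => by
        by_cases hb : b = k
        · subst hb; exact h0
        · exact hz b hb)
      rw [hdet] at this
      exact one_ne_zero this
    intro a ha
    have h0 := horth i a (fun h => ha h.symm)
    rw [sum3_single k (fun b hb => by rw [hz b hb, zero_mul])] at h0
    rcases mul_eq_zero.mp h0 with h | h
    · exact absurd h hnz
    · rw [starRingEnd_apply, star_eq_zero] at h
      exact h
  · push_neg at hA
    exfalso
    choose z hzz using hrow
    have hsame : ∀ i a, z i = z a := by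
      intro i a
      by_contra hne'
      have hia : i ≠ a := by rintro rfl; exact hne' rfl
      obtain ⟨k, hk1, hk2, hk⟩ := fin3_third (z i) (z a) hne'
      have h0 := horth i a hia
      have hz' : ∀ b, b ≠ k → g i b * (starRingEnd ℂ) (g a b) = 0 := by
        intro b hb
        rcases hk b hb with rfl | rfl
        · rw [hzz i, zero_mul]
        · rw [hzz a, map_zero, mul_zero]
      rw [sum3_single k hz'] at h0
      rcases mul_eq_zero.mp h0 with h | h
      · exact hA i (z i) k (fun h' => hk1 h'.symm) (hzz i) h
      · rw [starRingEnd_apply, star_eq_zero] at h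
        exact hA a (z a) k (fun h' => hk2 h'.symm) (hzz a) h
    have hcol : ∀ a, g a (z 0) = 0 := by
      intro a
      rw [hsame 0 a]
      exact hzz a
    have : g.det = 0 := Matrix.det_eq_zero_of_column_eq_zero (z 0) hcol
    rw [hdet] at this
    exact one_ne_zero this

theorem stmt_6 (g : Matrix (Fin 3) (Fin 3) ℂ)
    (hg : g ∈ Matrix.specialUnitaryGroup (Fin 3) ℂ) :
    {p : Matrix (Fin 3) (Fin 3) ℂ × Matrix (Fin 3) (Fin 3) ℂ |
        p.1 ∈ GammaSet ∧ p.2 ∈ GammaSet ∧ p.1 * g * p.2 = g} = {(1, 1)} ↔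
      ((∃ i, ∀ j, g i j ≠ 0) ∨ (∃ j, ∀ i, g i j ≠ 0)) := by
  obtain ⟨hu, hdet⟩ := Matrix.mem_specialUnitaryGroup_iff.mp hg
  have hginv : IsUnit g.det := by rw [hdet]; exact isUnit_one
  have hortho : g * g.conjTranspose = 1 := by
    have h := Matrix.mem_unitaryGroup_iff.mp hu
    rwa [Matrix.star_eq_conjTranspose] at h
  constructor
  · -- forward direction
    intro hset
    by_contra hcon
    push_neg at hcon
    obtain ⟨hrow, -⟩ := hcon
    obtain ⟨i, j, hzr, hzc⟩ := exists_cross_zero g hdet hortho (fun i => by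
      obtain ⟨b, hb⟩ := hrow i; exact ⟨b, hb⟩)
    set s : Matrix (Fin 3) (Fin 3) ℂ :=
      Matrix.diagonal (fun a => if a = i then (1 : ℂ) else -1) with hs_def
    set t : Matrix (Fin 3) (Fin 3) ℂ :=
      Matrix.diagonal (fun b => if b = j then (1 : ℂ) else -1) with ht_def
    have hdiag_mem : ∀ (i₀ : Fin 3),
        Matrix.diagonal (fun a => if a = i₀ then (1 : ℂ) else -1) ∈ GammaSet := by
      intro i₀
      refine ⟨fun a b hab => Matrix.diagonal_apply_ne _ hab, fun a => ?_, ?_⟩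
      · rw [Matrix.diagonal_apply_eq]
        by_cases h : a = i₀ <;> simp [h]
      · rw [Matrix.det_diagonal, Fin.prod_univ_three]
        fin_cases i₀ <;> norm_num [Fin.ext_iff]
    have hmem : (s, t) ∈ {p : Matrix (Fin 3) (Fin 3) ℂ × Matrix (Fin 3) (Fin 3) ℂ |
        p.1 ∈ GammaSet ∧ p.2 ∈ GammaSet ∧ p.1 * g * p.2 = g} := by
      refine ⟨hdiag_mem i, hdiag_mem j, ?_⟩
      ext a b
      rw [hs_def, ht_def, Matrix.mul_diagonal, Matrix.diagonal_mul]
      by_cases ha : a = i <;> by_cases hb : b = j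
      · simp [ha, hb]
      · subst ha; rw [hzr b hb]; ring
      · subst hb; rw [hzc a ha]; ring
      · simp only [if_neg ha, if_neg hb]; ring
    rw [hset] at hmem
    have hst : s = 1 := (Prod.mk.injEq _ _ _ _).mp hmem |>.1
    obtain ⟨a, ha⟩ := fin3_exists_ne i
    have h1 : s a a = -1 := by rw [hs_def, Matrix.diagonal_apply_eq, if_neg ha]
    rw [hst, Matrix.one_apply_eq] at h1
    norm_num at h1
  · -- backward direction
    intro hyp
    ext ⟨s, t⟩
    simp only [Set.mem_setOf_eq, Set.mem_singleton_iff, Prod.mk.injEq]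
    constructor
    · rintro ⟨hs, ht, heq⟩
      have hsd := gamma_eq_diagonal hs
      have htd := gamma_eq_diagonal ht
      have hentry : ∀ a b, s a a * g a b * t b b = g a b := by
        intro a b
        calc s a a * g a b * t b b
            = (Matrix.diagonal (fun i => s i i) * g * Matrix.diagonal (fun i => t i i)) a b := by
              rw [Matrix.mul_diagonal, Matrix.diagonal_mul]
          _ = g a b := by rw [← hsd, ← htd, heq]
      have hcancel : ∀ a b, g a b ≠ 0 → s a a * t b b = 1 := by
        intro a b hne
        have h := hentry a b
        have h2 : (s a a * t b b) * g a b = 1 * g a b := by linear_combination h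
        exact mul_right_cancel₀ hne h2
      have hsq : ∀ a, s a a * s a a = 1 := by
        intro a; rcases hs.2.1 a with h | h <;> rw [h] <;> ring
      have htq : ∀ b, t b b * t b b = 1 := by
        intro b; rcases ht.2.1 b with h | h <;> rw [h] <;> ring
      have hgi : g * g⁻¹ = 1 := Matrix.mul_nonsing_inv g hginv
      have hig : g⁻¹ * g = 1 := Matrix.nonsing_inv_mul g hginv
      rcases hyp with ⟨i, hfull⟩ | ⟨j, hfull⟩
      · -- full row i
        have ht1 : ∀ b, t b b = s i i := by
          intro b
          calc t b b = (s i i * s i i) * t b b := by rw [hsq i]; ring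
            _ = s i i * (s i i * t b b) := by ring
            _ = s i i := by rw [hcancel i b (hfull b)]; ring
        have hsi : s i i = 1 := by
          have hdt := ht.2.2
          rw [htd, Matrix.det_diagonal, Fin.prod_univ_three, ht1 0, ht1 1, ht1 2] at hdt
          calc s i i = s i i * (s i i * s i i) := by rw [hsq i]; ring
            _ = 1 := by linear_combination hdt
        have htone : t = 1 := by
          ext a b
          by_cases hab : a = b
          · subst hab; rw [ht1 a, hsi, Matrix.one_apply_eq]
          · rw [ht.1 a b hab, Matrix.one_apply_ne hab]
        have hsg : s * g = g := by rw [htone, mul_one] at heq; exact heq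
        refine ⟨?_, htone⟩
        calc s = s * (g * g⁻¹) := by rw [hgi, mul_one]
          _ = (s * g) * g⁻¹ := by rw [mul_assoc]
          _ = g * g⁻¹ := by rw [hsg]
          _ = 1 := hgi
      · -- full column j
        have hs1 : ∀ a, s a a = t j j := by
          intro a
          calc s a a = s a a * (t j j * t j j) := by rw [htq j]; ring
            _ = (s a a * t j j) * t j j := by ring
            _ = t j j := by rw [hcancel a j (hfull a)]; ring
        have htj : t j j = 1 := by
          have hds := hs.2.2
          rw [hsd, Matrix.det_diagonal, Fin.prod_univ_three, hs1 0, hs1 1, hs1 2] at hds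
          calc t j j = t j j * (t j j * t j j) := by rw [htq j]; ring
            _ = 1 := by linear_combination hds
        have hsone : s = 1 := by
          ext a b
          by_cases hab : a = b
          · subst hab; rw [hs1 a, htj, Matrix.one_apply_eq]
          · rw [hs.1 a b hab, Matrix.one_apply_ne hab]
        have hgt : g * t = g := by rw [hsone, one_mul] at heq; exact heq
        refine ⟨hsone, ?_⟩
        calc t = (g⁻¹ * g) * t := by rw [hig, one_mul]
          _ = g⁻¹ * (g * t) := by rw [mul_assoc]
          _ = g⁻¹ * g := by rw [hgt]
          _ = 1 := hig
    · rintro ⟨rfl, rfl⟩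
      exact ⟨⟨fun a b hab => Matrix.one_apply_ne hab,
        fun a => Or.inl (Matrix.one_apply_eq a), Matrix.det_one⟩,
        ⟨fun a b hab => Matrix.one_apply_ne hab,
        fun a => Or.inl (Matrix.one_apply_eq a), Matrix.det_one⟩, by rw [mul_one, one_mul]⟩
end

section
/- Let g be a 3×3 complex unitary matrix such that every row of g contains a zero entry and every column of g contains a zero entry. Then either g is a monomial matrix (exactly one nonzero entry in each row and column), or there exist indices i, j such that row i of g is supported only at column j and column j of g is supported only at row i (i.e., gᵢₖ = 0 for k ≠ j and gₖⱼ = 0 for k ≠ i). -/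
theorem stmt_8 (g : Matrix (Fin 3) (Fin 3) ℂ) (hg : g ∈ Matrix.unitaryGroup (Fin 3) ℂ)
    (hrow : ∀ i, ∃ j, g i j = 0) (hcol : ∀ j, ∃ i, g i j = 0) :
    (∃ ν : Equiv.Perm (Fin 3), ∀ i j, g i j ≠ 0 ↔ i = ν j) ∨
    (∃ i j, (∀ k, k ≠ j → g i k = 0) ∧ (∀ k, k ≠ i → g k j = 0)) := by
  have h1 : g * star g = 1 := Matrix.mem_unitaryGroup_iff.mp hg
  have h2 : star g * g = 1 := Matrix.mem_unitaryGroup_iff'.mp hg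
  have hrowE : ∀ i k, ∑ m, g i m * star (g k m) = if i = k then 1 else 0 := by
    intro i k
    have := congrFun (congrFun h1 i) k
    simpa [Matrix.mul_apply, Matrix.one_apply, Matrix.star_apply] using this
  have hcolE : ∀ j l, ∑ m, star (g m j) * g m l = if j = l then 1 else 0 := by
    intro j l
    have := congrFun (congrFun h2 j) l
    simpa [Matrix.mul_apply, Matrix.one_apply, Matrix.star_apply] using this
  have lemA : ∀ i j, (∀ k, k ≠ j → g i k = 0) → (∀ k, k ≠ i → g k j = 0) := by
    intro i j hij k hk
    have hnz : g i j ≠ 0 := by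
      intro h0
      have hz : ∀ m, g i m = 0 := by
        intro m
        by_cases hm : m = j
        · rw [hm]; exact h0
        · exact hij m hm
      have := hrowE i i
      simp [hz] at this
    have hsum := hrowE i k
    rw [if_neg (fun h => hk (h.symm)),
      Finset.sum_eq_single j (fun b _ hb => by simp [hij b hb])
        (fun h => absurd (Finset.mem_univ j) h)] at hsum
    rcases mul_eq_zero.mp hsum with h | h
    · exact absurd h hnz
    · simpa using h
  have lemB : ∀ i j, (∀ k, k ≠ i → g k j = 0) → (∀ k, k ≠ j → g i k = 0) := by
    intro i j hij k hk
    have hnz : g i j ≠ 0 := by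
      intro h0
      have hz : ∀ m, g m j = 0 := by
        intro m
        by_cases hm : m = i
        · rw [hm]; exact h0
        · exact hij m hm
      have := hcolE j j
      simp [hz] at this
    have hsum := hcolE j k
    rw [if_neg (fun h => hk (h.symm)),
      Finset.sum_eq_single i (fun b _ hb => by simp [hij b hb])
        (fun h => absurd (Finset.mem_univ i) h)] at hsum
    rcases mul_eq_zero.mp hsum with h | h
    · simp at h; exact absurd h hnz
    · exact h
  right
  have claimC : (∃ i j, ∀ k, k ≠ j → g i k = 0) ∨ (∃ i j, ∀ k, k ≠ i → g k j = 0) := by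
    by_contra hC
    push_neg at hC
    obtain ⟨hC1, hC2⟩ := hC
    choose σ hσ using hrow
    have trich : ∀ a b c m : Fin 3, a ≠ b → c ≠ a → c ≠ b → m ≠ c → m = a ∨ m = b := by decide
    by_cases hinj : σ 0 = σ 1
    · -- column σ 0 has zeros at rows 0 and 1, so supported only at row 2
      obtain ⟨k, hk, hknz⟩ := hC2 2 (σ 0)
      rcases trich 0 1 2 k (by decide) (by decide) (by decide) hk with h | h
      · exact hknz (h ▸ hσ 0)
      · exact hknz (h ▸ (hinj ▸ hσ 1))
    · obtain ⟨c, hc0, hc1⟩ : ∃ c : Fin 3, c ≠ σ 0 ∧ c ≠ σ 1 := by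
        revert hinj
        have : ∀ a b : Fin 3, a ≠ b → ∃ c : Fin 3, c ≠ a ∧ c ≠ b := by decide
        exact this _ _
      have hg0c : g 0 c ≠ 0 := by
        obtain ⟨k, hk, hknz⟩ := hC1 0 (σ 1)
        rcases trich (σ 0) c (σ 1) k (Ne.symm hc0) (fun h => hinj h.symm)
            (fun h => hc1 h.symm) hk with h | h
        · exact absurd (h ▸ hknz) (by rw [h] at hknz; exact fun _ => hknz (hσ 0))
        · rwa [h] at hknz
      have hg1c : g 1 c ≠ 0 := by
        obtain ⟨k, hk, hknz⟩ := hC1 1 (σ 0)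
        rcases trich (σ 1) c (σ 0) k (Ne.symm hc1) hinj (fun h => hc0 h.symm) hk with h | h
        · rw [h] at hknz; exact absurd (hσ 1) hknz
        · rwa [h] at hknz
      have hsum := hrowE 0 1
      rw [if_neg (by decide),
        Finset.sum_eq_single c (fun b _ hb => ?_) (fun h => absurd (Finset.mem_univ c) h)]
        at hsum
      · rcases mul_eq_zero.mp hsum with h | h
        · exact hg0c h
        · exact hg1c (by simpa using h)
      · rcases trich (σ 0) (σ 1) c b hinj hc0 hc1 hb with h | h
        · rw [h, hσ 0, zero_mul]
        · rw [h, hσ 1, star_zero, mul_zero]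
  rcases claimC with ⟨i, j, h⟩ | ⟨i, j, h⟩
  · exact ⟨i, j, h, lemA i j h⟩
  · exact ⟨i, j, lemB i j h, h⟩
end

section
/- Let g ∈ SU(3) with i ≠ j be such that gᵢₖ = 0 for k ≠ j, gₖⱼ = 0 for k ≠ i, and g is not a monomial matrix. Then for every s in the subgroup Γ of diagonal ±1 matrices of determinant 1, the matrix g·s·g has a row with no zero entries or a column with no zero entries. -/
private lemma sum3 {f : Fin 3 → ℂ} {a b c : Fin 3} (h1 : a ≠ b) (h2 : a ≠ c) (h3 : b ≠ c) :
    ∑ k, f k = f a + f b + f c := by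
  have huniv : ({a, b, c} : Finset (Fin 3)) = Finset.univ := by
    apply Finset.eq_univ_of_card
    rw [Finset.card_insert_of_notMem (by simp [h1, h2]),
      Finset.card_insert_of_notMem (by simp [h3]), Finset.card_singleton]
    rfl
  rw [← huniv, Finset.sum_insert (by simp [h1, h2]), Finset.sum_insert (by simp [h3]),
    Finset.sum_singleton, add_assoc]

private lemma third (x y : Fin 3) (hxy : x ≠ y) : ∃ z, z ≠ x ∧ z ≠ y ∧ ∀ w : Fin 3, w = x ∨ w = y ∨ w = z := by
  revert x y hxy; decide

theorem stmt_10 (g : Matrix (Fin 3) (Fin 3) ℂ)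
    (hg : g ∈ Matrix.specialUnitaryGroup (Fin 3) ℂ) (i j : Fin 3) (hij : i ≠ j)
    (hrow : ∀ k, k ≠ j → g i k = 0) (hcol : ∀ k, k ≠ i → g k j = 0)
    (hmon : ¬ ∃ ν : Equiv.Perm (Fin 3), ∀ a b, g a b ≠ 0 ↔ a = ν b)
    (s : Matrix (Fin 3) (Fin 3) ℂ)
    (hs : (∀ a b, a ≠ b → s a b = 0) ∧ (∀ a, s a a = 1 ∨ s a a = -1) ∧ s.det = 1) :
    (∃ r, ∀ c, (g * s * g) r c ≠ 0) ∨ (∃ c, ∀ r, (g * s * g) r c ≠ 0) := by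
  rw [Matrix.mem_specialUnitaryGroup_iff] at hg
  obtain ⟨hU, hdet⟩ := hg
  rw [Matrix.mem_unitaryGroup_iff'] at hU
  -- columns orthonormal
  have hcolon : ∀ b b' : Fin 3, ∑ k, (starRingEnd ℂ) (g k b) * g k b' = if b = b' then 1 else 0 := by
    intro b b'
    have := congrFun (congrFun hU b) b'
    simpa [Matrix.mul_apply, Matrix.one_apply, Matrix.star_apply, eq_comm] using this
  have hgij : g i j ≠ 0 := by
    intro h0
    have hz : g.det = 0 := by
      apply Matrix.det_eq_zero_of_row_eq_zero i
      intro k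
      by_cases hk : k = j
      · subst hk; exact h0
      · exact hrow k hk
    rw [hdet] at hz; exact one_ne_zero hz
  have ds : ∀ k, s k k ≠ 0 := by
    intro k; rcases hs.2.1 k with h | h <;> rw [h] <;> norm_num
  -- key: all block entries nonzero
  have key : ∀ a b, a ≠ i → b ≠ j → g a b ≠ 0 := by
    intro a b ha hb
    by_contra h0
    obtain ⟨a', ha'i, ha'a, hcova⟩ := third i a (Ne.symm ha)
    obtain ⟨b', hb'j, hb'b, hcovb⟩ := third j b (Ne.symm hb)
    have hib : g i b = 0 := hrow b hb
    have hib' : g i b' = 0 := hrow b' hb'j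
    -- column b norm
    have h1 : (starRingEnd ℂ) (g a' b) * g a' b = 1 := by
      have := hcolon b b
      rw [sum3 (f := fun k => (starRingEnd ℂ) (g k b) * g k b) (Ne.symm ha) (Ne.symm ha'i) (Ne.symm ha'a)] at this
      · simpa [hib, h0] using this
    have ha'b : g a' b ≠ 0 := by
      intro h; rw [h] at h1; simp at h1
    -- columns b, b' orthogonal
    have h2 : g a' b' = 0 := by
      have := hcolon b b'
      rw [if_neg (by exact fun h => hb'b (h.symm))] at this
      rw [sum3 (f := fun k => (starRingEnd ℂ) (g k b) * g k b') (Ne.symm ha) (Ne.symm ha'i) (Ne.symm ha'a)] at this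
      simp only [hib, h0, map_zero, zero_mul, zero_add, mul_eq_zero] at this
      rcases this with h | h
      · exact absurd (by simpa using h) ha'b
      · exact h
    -- column b' norm
    have h3 : (starRingEnd ℂ) (g a b') * g a b' = 1 := by
      have := hcolon b' b'
      rw [sum3 (f := fun k => (starRingEnd ℂ) (g k b') * g k b') (Ne.symm ha) (Ne.symm ha'i) (Ne.symm ha'a)] at this
      simpa [hib', h2] using this
    have hab' : g a b' ≠ 0 := by
      intro h; rw [h] at h3; simp at h3
    -- build the permutation j ↦ i, b ↦ a', b' ↦ a
    apply hmon
    refine ⟨⟨fun y => if y = j then i else if y = b then a' else a,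
            fun x => if x = i then j else if x = a' then b else b', ?_, ?_⟩, ?_⟩
    · intro y
      rcases hcovb y with h | h | h <;> rw [h] <;>
        simp [hij.symm, ha, hb, hb'j, hb'b, ha'i, ha'a, Ne.symm ha'a]
    · intro x
      rcases hcova x with h | h | h <;> rw [h] <;>
        simp [hij.symm, ha, hb, hb'j, hb'b, ha'i, ha'a, Ne.symm ha'a]
    · intro x y
      simp only [Equiv.coe_fn_mk]
      rcases hcovb y with h | h | h <;> rw [h]
      · rw [if_pos rfl]
        constructor
        · intro hne
          rcases hcova x with h | h | h
          · exact h
          · rw [h] at hne; exact absurd (hcol a ha) hne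
          · rw [h] at hne; exact absurd (hcol a' ha'i) hne
        · intro h; rw [h]; exact hgij
      · rw [if_neg hb, if_pos rfl]
        constructor
        · intro hne
          rcases hcova x with h | h | h
          · rw [h] at hne; exact absurd hib hne
          · rw [h] at hne; exact absurd h0 hne
          · exact h
        · intro h; rw [h]; exact ha'b
      · rw [if_neg hb'j, if_neg hb'b]
        constructor
        · intro hne
          rcases hcova x with h | h | h
          · rw [h] at hne; exact absurd hib' hne
          · exact h
          · rw [h] at hne; exact absurd h2 hne
        · intro h; rw [h]; exact hab'
  -- the third index m
  obtain ⟨m, hmi, hmj, _⟩ := third i j hij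
  -- product entries
  have hgs : ∀ r k, (g * s) r k = g r k * s k k := by
    intro r k
    rw [Matrix.mul_apply]
    apply Finset.sum_eq_single k
    · intro l _ hl; rw [hs.1 l k hl, mul_zero]
    · simp
  have hprod : ∀ r c, (g * s * g) r c = ∑ k, g r k * s k k * g k c := by
    intro r c
    rw [Matrix.mul_apply]
    exact Finset.sum_congr rfl fun k _ => by rw [hgs]
  -- choose column c := m (c ≠ j)
  set c := m with hc
  have hcj : c ≠ j := hmj
  right
  refine ⟨c, fun r => ?_⟩
  rw [hprod]
  rw [sum3 (f := fun k => g r k * s k k * g k c) hij.symm (Ne.symm hmj) (Ne.symm hmi)]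
  by_cases hri : r = i
  · rw [hri, hrow i hij, hrow m hmj]
    simp only [zero_mul, mul_zero, add_zero, zero_add]
    exact mul_ne_zero (mul_ne_zero hgij (ds j)) (key j c hij.symm hcj)
  · rw [hcol r hri, hrow c hcj]
    simp only [zero_mul, mul_zero, add_zero, zero_add]
    exact mul_ne_zero (mul_ne_zero (key r m hri hmj) (ds m)) (key m c hmi hcj)
end

section
/- Let g, g' ∈ SU(3) and let i ≠ j be indices such that: gᵢₖ = 0 for k ≠ i, gₖᵢ = 0 for k ≠ i, and g is not monomial; g'ⱼₖ = 0 for k ≠ j, g'ₖⱼ = 0 for k ≠ j, and g' is not monomial. Then for every s in the subgroup Γ of diagonal ±1 matrices of determinant 1, the matrix g·s·g' has a row with no zero entries or a column with no zero entries. -/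
def thrd (x y : Fin 3) : Fin 3 := -(x+y)

lemma thrd_prop : ∀ x y : Fin 3, x ≠ y → thrd x y ≠ x ∧ thrd x y ≠ y := by decide

lemma univ_eq : ∀ x y : Fin 3, x ≠ y → (Finset.univ : Finset (Fin 3)) = {x, y, thrd x y} := by
  decide

lemma univ_shift : ∀ i : Fin 3,
    (Finset.univ : Finset (Fin 3)) = {i, i+1, i+2} ∧ i ≠ i+1 ∧ i ≠ i+2 ∧ i+1 ≠ i+2 := by decide

lemma mem_three : ∀ x y c : Fin 3, x ≠ y → c = x ∨ c = y ∨ c = thrd x y := by decide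

lemma sum_three {x y z : Fin 3} (hxy : x ≠ y) (hxz : x ≠ z) (hyz : y ≠ z)
    (f : Fin 3 → ℂ) (hu : (Finset.univ : Finset (Fin 3)) = {x, y, z}) :
    ∑ k, f k = f x + f y + f z := by
  rw [hu]
  rw [Finset.sum_insert (by simp [hxy, hxz]), Finset.sum_insert (by simp [hyz]),
    Finset.sum_singleton, add_assoc]

section
variable (g : Matrix (Fin 3) (Fin 3) ℂ)

lemma col_eq (h2 : star g * g = 1) {x y z : Fin 3} (hxy : x ≠ y) (hxz : x ≠ z) (hyz : y ≠ z)
    (hu : (Finset.univ : Finset (Fin 3)) = {x, y, z}) (b : Fin 3) :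
    (starRingEnd ℂ) (g x b) * g x b + (starRingEnd ℂ) (g y b) * g y b
      + (starRingEnd ℂ) (g z b) * g z b = 1 := by
  have e : (star g * g) b b = (1 : Matrix (Fin 3) (Fin 3) ℂ) b b := by rw [h2]
  rw [Matrix.mul_apply] at e
  rw [sum_three hxy hxz hyz _ hu] at e
  simpa [Matrix.star_apply, Matrix.one_apply] using e

lemma row_eq (h1 : g * star g = 1) {x y z : Fin 3} (hxy : x ≠ y) (hxz : x ≠ z) (hyz : y ≠ z)
    (hu : (Finset.univ : Finset (Fin 3)) = {x, y, z}) (a : Fin 3) :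
    g a x * (starRingEnd ℂ) (g a x) + g a y * (starRingEnd ℂ) (g a y)
      + g a z * (starRingEnd ℂ) (g a z) = 1 := by
  have e : (g * star g) a a = (1 : Matrix (Fin 3) (Fin 3) ℂ) a a := by rw [h1]
  rw [Matrix.mul_apply] at e
  rw [sum_three hxy hxz hyz _ hu] at e
  simpa [Matrix.star_apply, Matrix.one_apply] using e

lemma gii_ne (h2 : star g * g = 1) (i : Fin 3) (hcol : ∀ k, k ≠ i → g k i = 0) :
    g i i ≠ 0 := by
  obtain ⟨hu, h01, h02, h12⟩ := univ_shift i
  have e := col_eq g h2 h01 h02 h12 hu i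
  rw [hcol (i+1) h01.symm, hcol (i+2) h02.symm] at e
  simp only [map_zero, mul_zero, zero_mul, add_zero] at e
  intro h0
  rw [h0] at e
  simp at e

lemma build_perm (h1 : g * star g = 1) (h2 : star g * g = 1)
    (i a a' b b' : Fin 3)
    (hai : a ≠ i) (ha'i : a' ≠ i) (haa' : a ≠ a')
    (hbi : b ≠ i) (hb'i : b' ≠ i) (hbb' : b ≠ b')
    (hA : (Finset.univ : Finset (Fin 3)) = {i, a, a'})
    (hB : (Finset.univ : Finset (Fin 3)) = {i, b, b'})
    (hrow : ∀ k, k ≠ i → g i k = 0) (hcol : ∀ k, k ≠ i → g k i = 0)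
    (h0 : g a b = 0) :
    ∃ ν : Equiv.Perm (Fin 3), ∀ x y, g x y ≠ 0 ↔ x = ν y := by
  have memA : ∀ x : Fin 3, x = i ∨ x = a ∨ x = a' := fun x => by
    have := Finset.mem_univ x; rw [hA] at this; simpa using this
  have memB : ∀ x : Fin 3, x = i ∨ x = b ∨ x = b' := fun x => by
    have := Finset.mem_univ x; rw [hB] at this; simpa using this
  have gii : g i i ≠ 0 := gii_ne g h2 i hcol
  have cB := col_eq g h2 hai.symm ha'i.symm haa' hA
  have rB := row_eq g h1 hbi.symm hb'i.symm hbb' hB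
  -- column b
  have c1 : (starRingEnd ℂ) (g a' b) * g a' b = 1 := by
    have := cB b
    rw [hrow b hbi, h0] at this
    simpa using this
  have ga'b : g a' b ≠ 0 := by
    intro h; rw [h] at c1; simp at c1
  -- row a'
  have r1 : g a' b' = 0 := by
    have := rB a'
    rw [hcol a' ha'i] at this
    rw [mul_comm (g a' b)] at this
    rw [c1] at this
    simp only [map_zero, zero_mul, zero_add] at this
    have h2' : g a' b' * (starRingEnd ℂ) (g a' b') = 0 := by linear_combination this
    rcases mul_eq_zero.mp h2' with h | h
    · exact h
    · simpa using congrArg (starRingEnd ℂ) h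
  -- column b'
  have c2 : g a b' ≠ 0 := by
    have := cB b'
    rw [hrow b' hb'i, r1] at this
    simp only [map_zero, mul_zero, zero_mul, zero_add, add_zero] at this
    intro h; rw [h] at this; simp at this
  -- build the permutation
  set f : Fin 3 → Fin 3 := fun x => if x = i then i else if x = b then a' else a with hf
  have fi : f i = i := by simp [hf]
  have fb : f b = a' := by simp [hf, hbi, hbb']
  have fb' : f b' = a := by simp [hf, hb'i, hbb'.symm]
  have finj : Function.Injective f := by
    intro x y hxy
    rcases memB x with rfl | rfl | rfl <;> rcases memB y with rfl | rfl | rfl <;>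
      simp only [fi, fb, fb'] at hxy <;> first
      | rfl
      | exact absurd hxy.symm ha'i | exact absurd hxy ha'i
      | exact absurd hxy.symm hai | exact absurd hxy hai
      | exact absurd hxy.symm haa' | exact absurd hxy haa'
  have ν : Equiv.Perm (Fin 3) := Equiv.ofBijective f (Finite.injective_iff_bijective.mp finj)
  refine ⟨Equiv.ofBijective f (Finite.injective_iff_bijective.mp finj), ?_⟩
  intro x y
  simp only [Equiv.ofBijective_apply]
  rcases memB y with hy | hy | hy
  · rw [hy, fi]
    constructor
    · intro h; by_contra hx; exact h (hcol x hx)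
    · rintro rfl; exact gii
  · rw [hy, fb]
    rcases memA x with hx | hx | hx <;> rw [hx]
    · simp [hrow b hbi, ha'i.symm]
    · simp [h0, haa']
    · simp [ga'b]
  · rw [hy, fb']
    rcases memA x with hx | hx | hx <;> rw [hx]
    · simp [hrow b' hb'i, hai.symm]
    · simp [c2]
    · simp [r1, haa'.symm]

lemma block (h1 : g * star g = 1) (h2 : star g * g = 1) (i : Fin 3)
    (hrow : ∀ k, k ≠ i → g i k = 0) (hcol : ∀ k, k ≠ i → g k i = 0)
    (hmon : ¬ ∃ ν : Equiv.Perm (Fin 3), ∀ a b, g a b ≠ 0 ↔ a = ν b) :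
    ∀ a b, a ≠ i → b ≠ i → g a b ≠ 0 := by
  intro a b ha hb h0
  obtain ⟨ha'i, ha'a⟩ := thrd_prop i a (Ne.symm ha)
  obtain ⟨hb'i, hb'b⟩ := thrd_prop i b (Ne.symm hb)
  exact hmon (build_perm g h1 h2 i a (thrd i a) b (thrd i b)
    ha ha'i ha'a.symm hb hb'i hb'b.symm
    (univ_eq i a (Ne.symm ha)) (univ_eq i b (Ne.symm hb)) hrow hcol h0)

end

theorem stmt_11 (g g' : Matrix (Fin 3) (Fin 3) ℂ)
    (hg : g ∈ Matrix.specialUnitaryGroup (Fin 3) ℂ)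
    (hg' : g' ∈ Matrix.specialUnitaryGroup (Fin 3) ℂ)
    (i j : Fin 3) (hij : i ≠ j)
    (hrow : ∀ k, k ≠ i → g i k = 0) (hcol : ∀ k, k ≠ i → g k i = 0)
    (hmon : ¬ ∃ ν : Equiv.Perm (Fin 3), ∀ a b, g a b ≠ 0 ↔ a = ν b)
    (hrow' : ∀ k, k ≠ j → g' j k = 0) (hcol' : ∀ k, k ≠ j → g' k j = 0)
    (hmon' : ¬ ∃ ν : Equiv.Perm (Fin 3), ∀ a b, g' a b ≠ 0 ↔ a = ν b)
    (s : Matrix (Fin 3) (Fin 3) ℂ)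
    (hs : (∀ a b, a ≠ b → s a b = 0) ∧ (∀ a, s a a = 1 ∨ s a a = -1) ∧ s.det = 1) :
    (∃ r, ∀ c, (g * s * g') r c ≠ 0) ∨ (∃ c, ∀ r, (g * s * g') r c ≠ 0) := by
  have hg1 : g * star g = 1 := Matrix.mem_unitaryGroup_iff.mp
    (Matrix.mem_specialUnitaryGroup_iff.mp hg).1
  have hg2 : star g * g = 1 := Matrix.mem_unitaryGroup_iff'.mp
    (Matrix.mem_specialUnitaryGroup_iff.mp hg).1
  have hg1' : g' * star g' = 1 := Matrix.mem_unitaryGroup_iff.mp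
    (Matrix.mem_specialUnitaryGroup_iff.mp hg').1
  have hg2' : star g' * g' = 1 := Matrix.mem_unitaryGroup_iff'.mp
    (Matrix.mem_specialUnitaryGroup_iff.mp hg').1
  set l := thrd i j with hl
  obtain ⟨hli, hlj⟩ := thrd_prop i j hij
  have hu : (Finset.univ : Finset (Fin 3)) = {i, j, l} := univ_eq i j hij
  have hsum : ∀ f : Fin 3 → ℂ, ∑ k, f k = f i + f j + f l :=
    fun f => sum_three hij (Ne.symm hli) (Ne.symm hlj) f hu
  have Bg : ∀ a b, a ≠ i → b ≠ i → g a b ≠ 0 := block g hg1 hg2 i hrow hcol hmon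
  have Bg' : ∀ a b, a ≠ j → b ≠ j → g' a b ≠ 0 := block g' hg1' hg2' j hrow' hcol' hmon'
  have g'jj : g' j j ≠ 0 := gii_ne g' hg2' j hcol'
  have sne : ∀ a, s a a ≠ 0 := by
    intro a; rcases hs.2.1 a with h | h <;> rw [h] <;> norm_num
  left
  refine ⟨j, ?_⟩
  intro c
  have expand : (g * s * g') j c =
      (g j i * s i i + g j j * s j i + g j l * s l i) * g' i c
      + (g j i * s i j + g j j * s j j + g j l * s l j) * g' j c
      + (g j i * s i l + g j j * s j l + g j l * s l l) * g' l c := by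
    rw [Matrix.mul_apply]
    rw [hsum]
    simp only [Matrix.mul_apply, hsum]
  rw [expand, hcol j hij.symm, hs.1 j i hij.symm, hs.1 l i hli,
    hs.1 i j hij, hs.1 l j hlj, hs.1 i l (Ne.symm hli), hs.1 j l (Ne.symm hlj)]
  simp only [mul_zero, zero_mul, add_zero, zero_add]
  rcases mem_three i j c hij with hc | hc | hc
  · rw [hc, hrow' i hij]
    simp only [mul_zero, zero_add]
    exact mul_ne_zero (mul_ne_zero (Bg j l hij.symm hli) (sne l)) (Bg' l i hlj hij)
  · rw [hc, hcol' l hlj]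
    simp only [mul_zero, add_zero]
    exact mul_ne_zero (mul_ne_zero (Bg j j hij.symm hij.symm) (sne j)) g'jj
  · rw [hc, ← hl, hrow' l hlj]
    simp only [mul_zero, zero_add]
    exact mul_ne_zero (mul_ne_zero (Bg j l hij.symm hli) (sne l)) (Bg' l l hlj hlj)
end

section
/- For each m ≥ 1, there exists a bicharacter σ : A × A → {±1}, where A is the quotient of (ℤ/2ℤ)^{2m+1} (with generators t₁,…,t_{2m+1}) by the relation t₁t₂⋯t_{2m+1} = 1, such that σ(tᵢ,tⱼ) = -1 and σ(tⱼ,tᵢ) = 1 for 1 ≤ i < j ≤ 2m, σ(tᵢ,tᵢ) = (-1)^m for 1 ≤ i ≤ 2m+1, and σ(tᵢ,t_{2m+1}) = (-1)^{m-i} = -σ(t_{2m+1},tᵢ) for 1 ≤ i ≤ 2m. -/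
/-- The subgroup generated by `t₁ t₂ ⋯ t_{2m+1}` in `(ℤ/2)^{2m+1}` (written additively). -/
def relSubgroup (m : ℕ) : AddSubgroup (Fin (2 * m + 1) → ZMod 2) :=
  AddSubgroup.closure {fun _ => 1}

/-- The quotient group `A` of `(ℤ/2)^{2m+1}` by the relation `t₁ t₂ ⋯ t_{2m+1} = 1`. -/
def Am (m : ℕ) : Type := (Fin (2 * m + 1) → ZMod 2) ⧸ relSubgroup m

instance (m : ℕ) : AddCommGroup (Am m) :=
  inferInstanceAs (AddCommGroup ((Fin (2 * m + 1) → ZMod 2) ⧸ relSubgroup m))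

/-- The image of the `i`-th generator `tᵢ` in `A`. -/
def tgen (m : ℕ) (i : Fin (2 * m + 1)) : Am m :=
  QuotientAddGroup.mk (Pi.single i 1)

/-- matrix of exponents -/
def cmat (m : ℕ) (i j : Fin (2 * m + 1)) : ZMod 2 :=
  if (i : ℕ) = 2 * m then
    (if (j : ℕ) = 2 * m then (m : ZMod 2) else (m : ZMod 2) + ((j : ℕ) : ZMod 2))
  else if (j : ℕ) = 2 * m then (m : ZMod 2) + ((i : ℕ) : ZMod 2) + 1
  else if i = j then (m : ZMod 2)
  else if i < j then 1 else 0

def Bf (m : ℕ) (x y : Fin (2 * m + 1) → ZMod 2) : ZMod 2 :=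
  ∑ i, ∑ j, x i * y j * cmat m i j

lemma sum_ite_lt (N k : ℕ) (hk : k ≤ N) :
    ∑ j : Fin N, (if (j : ℕ) < k then (1 : ZMod 2) else 0) = (k : ZMod 2) := by
  rw [Fin.sum_univ_eq_sum_range (fun j => if j < k then (1 : ZMod 2) else 0)]
  rw [← Finset.sum_subset (Finset.range_subset_range.2 hk)
    (fun x _ hx => by simp only [Finset.mem_range] at hx; simp [hx])]
  rw [Finset.sum_ite_of_true (fun x hx => Finset.mem_range.1 hx)]
  simp

lemma sum_fin_cast (N : ℕ) :
    ∑ j : Fin N, ((j : ℕ) : ZMod 2) = ((N * (N - 1) / 2 : ℕ) : ZMod 2) := by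
  rw [Fin.sum_univ_eq_sum_range (fun j => ((j : ℕ) : ZMod 2))]
  rw [← Nat.cast_sum]
  congr 1
  have := Finset.sum_range_id_mul_two N
  omega

lemma gauss_cast (m : ℕ) : ((2 * m * (2 * m - 1) / 2 : ℕ) : ZMod 2) = (m : ZMod 2) := by
  match m with
  | 0 => rfl
  | k + 1 =>
    have e : 2 * (k + 1) - 1 = 2 * k + 1 := by omega
    have h : 2 * (k + 1) * (2 * (k + 1) - 1) / 2 = (k + 1) * (2 * k + 1) := by
      have h2 : 2 * (k + 1) * (2 * (k + 1) - 1) = 2 * ((k + 1) * (2 * k + 1)) := by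
        rw [e]; ring
      omega
    rw [h]
    push_cast
    generalize (k : ZMod 2) = a
    revert a
    decide

lemma colsum (m : ℕ) (j : Fin (2 * m + 1)) : ∑ i, cmat m i j = 0 := by
  by_cases hj : (j : ℕ) = 2 * m
  · -- last column
    rw [Fin.sum_univ_castSucc]
    have h1 : ∀ i : Fin (2 * m), cmat m i.castSucc j
        = (m : ZMod 2) + ((i : ℕ) : ZMod 2) + 1 := by
      intro i
      have hlt := i.isLt
      simp only [cmat, Fin.coe_castSucc]
      rw [if_neg (by omega : ¬ (i : ℕ) = 2 * m), if_pos hj]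
    have h2 : cmat m (Fin.last (2 * m)) j = (m : ZMod 2) := by
      simp [cmat, hj]
    rw [Finset.sum_congr rfl (fun i _ => h1 i), h2]
    rw [Finset.sum_add_distrib, Finset.sum_add_distrib, sum_fin_cast, gauss_cast]
    simp only [Finset.sum_const, Finset.card_univ, Fintype.card_fin, nsmul_eq_mul]
    push_cast
    have : ((2 : ZMod 2)) = 0 := rfl
    rw [this]
    generalize (m : ZMod 2) = a
    revert a
    decide
  · -- other columns
    have hj' : (j : ℕ) < 2 * m := by omega
    rw [Fin.sum_univ_castSucc]
    have h2 : cmat m (Fin.last (2 * m)) j = (m : ZMod 2) + ((j : ℕ) : ZMod 2) := by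
      simp [cmat, hj]
    have h1 : ∀ i : Fin (2 * m), cmat m i.castSucc j
        = (if (i : ℕ) = (j : ℕ) then (m : ZMod 2) else 0)
          + (if (i : ℕ) < (j : ℕ) then 1 else 0) := by
      intro i
      have hlt := i.isLt
      have he : (i.castSucc = j) ↔ ((i : ℕ) = (j : ℕ)) := by
        rw [Fin.ext_iff]; simp
      have hl : (i.castSucc < j) ↔ ((i : ℕ) < (j : ℕ)) := by
        rw [Fin.lt_def]; simp
      simp only [cmat, Fin.coe_castSucc]
      rw [if_neg (by omega : ¬ (i : ℕ) = 2 * m), if_neg hj]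
      by_cases h : i.castSucc = j
      · have hn := he.1 h
        rw [if_pos h, if_pos hn, if_neg (by omega : ¬ (i : ℕ) < (j : ℕ))]
        simp
      · rw [if_neg h, if_neg (fun hh => h (he.2 hh))]
        by_cases h' : i.castSucc < j
        · rw [if_pos h', if_pos (hl.1 h'), zero_add]
        · rw [if_neg h', if_neg (fun hh => h' (hl.2 hh)), zero_add]
    rw [Finset.sum_congr rfl (fun i _ => h1 i), h2, Finset.sum_add_distrib]
    have hs1 : ∑ i : Fin (2 * m), (if (i : ℕ) = (j : ℕ) then (m : ZMod 2) else 0)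
        = (m : ZMod 2) := by
      rw [Fin.sum_univ_eq_sum_range (fun i => if i = (j : ℕ) then (m : ZMod 2) else 0)]
      rw [Finset.sum_ite_eq' (Finset.range (2 * m)) (j : ℕ) (fun _ => (m : ZMod 2))]
      simp [hj']
    have hs2 := sum_ite_lt (2 * m) (j : ℕ) (le_of_lt hj')
    rw [hs1, hs2]
    generalize (m : ZMod 2) = a
    generalize ((j : ℕ) : ZMod 2) = b
    revert a b
    decide

lemma rowsum (m : ℕ) (i : Fin (2 * m + 1)) : ∑ j, cmat m i j = 0 := by
  by_cases hi : (i : ℕ) = 2 * m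
  · -- last row
    rw [Fin.sum_univ_castSucc]
    have h2 : cmat m i (Fin.last (2 * m)) = (m : ZMod 2) := by
      simp [cmat, hi]
    have h1 : ∀ j : Fin (2 * m), cmat m i j.castSucc
        = (m : ZMod 2) + ((j : ℕ) : ZMod 2) := by
      intro j
      have hlt := j.isLt
      simp only [cmat, Fin.coe_castSucc]
      rw [if_pos hi, if_neg (by omega : ¬ (j : ℕ) = 2 * m)]
    rw [Finset.sum_congr rfl (fun j _ => h1 j), h2]
    rw [Finset.sum_add_distrib, sum_fin_cast, gauss_cast]
    simp only [Finset.sum_const, Finset.card_univ, Fintype.card_fin, nsmul_eq_mul]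
    push_cast
    have h0 : ((2 : ZMod 2)) = 0 := rfl
    rw [h0]
    generalize (m : ZMod 2) = a
    revert a
    decide
  · -- other rows
    have hi' : (i : ℕ) < 2 * m := by have := i.isLt; omega
    rw [Fin.sum_univ_castSucc]
    have h2 : cmat m i (Fin.last (2 * m)) = (m : ZMod 2) + ((i : ℕ) : ZMod 2) + 1 := by
      simp [cmat, hi]
    have h1 : ∀ j : Fin (2 * m), cmat m i j.castSucc
        = (if (j : ℕ) = (i : ℕ) then (m : ZMod 2) else 0)
          + (1 + (if (j : ℕ) < (i : ℕ) + 1 then 1 else 0)) := by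
      intro j
      have hlt := j.isLt
      have he : (i = j.castSucc) ↔ ((j : ℕ) = (i : ℕ)) := by
        rw [Fin.ext_iff]; simp; omega
      have hl : (i < j.castSucc) ↔ ((i : ℕ) < (j : ℕ)) := by
        rw [Fin.lt_def]; simp
      simp only [cmat, Fin.coe_castSucc]
      rw [if_neg hi, if_neg (by omega : ¬ (j : ℕ) = 2 * m)]
      by_cases h : i = j.castSucc
      · have hn := he.1 h
        rw [if_pos h, if_pos hn, if_pos (by omega : (j : ℕ) < (i : ℕ) + 1)]
        generalize (m : ZMod 2) = a
        revert a
        decide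
      · rw [if_neg h, if_neg (fun hh => h (he.2 hh)), zero_add]
        by_cases h' : i < j.castSucc
        · have hn := hl.1 h'
          rw [if_pos h', if_neg (by omega : ¬ (j : ℕ) < (i : ℕ) + 1)]
          decide
        · have hn : ¬ (i : ℕ) < (j : ℕ) := fun hh => h' (hl.2 hh)
          rw [if_neg h', if_pos (by omega : (j : ℕ) < (i : ℕ) + 1)]
          decide
    rw [Finset.sum_congr rfl (fun j _ => h1 j), h2]
    rw [Finset.sum_add_distrib, Finset.sum_add_distrib]
    have hs1 : ∑ j : Fin (2 * m), (if (j : ℕ) = (i : ℕ) then (m : ZMod 2) else 0)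
        = (m : ZMod 2) := by
      rw [Fin.sum_univ_eq_sum_range (fun j => if j = (i : ℕ) then (m : ZMod 2) else 0)]
      rw [Finset.sum_ite_eq' (Finset.range (2 * m)) (i : ℕ) (fun _ => (m : ZMod 2))]
      simp [hi']
    have hs2 := sum_ite_lt (2 * m) ((i : ℕ) + 1) (by omega)
    rw [hs1, hs2]
    simp only [Finset.sum_const, Finset.card_univ, Fintype.card_fin, nsmul_eq_mul]
    push_cast
    have h0 : ((2 : ZMod 2)) = 0 := rfl
    rw [h0]
    generalize (m : ZMod 2) = a
    generalize ((i : ℕ) : ZMod 2) = b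
    revert a b
    decide

lemma Bf_add_left (m : ℕ) (x x' y : Fin (2 * m + 1) → ZMod 2) :
    Bf m (x + x') y = Bf m x y + Bf m x' y := by
  simp [Bf, add_mul, Finset.sum_add_distrib]

lemma Bf_add_right (m : ℕ) (x y y' : Fin (2 * m + 1) → ZMod 2) :
    Bf m x (y + y') = Bf m x y + Bf m x y' := by
  simp [Bf, mul_add, add_mul, Finset.sum_add_distrib]

lemma Bf_zero_left (m : ℕ) (y : Fin (2 * m + 1) → ZMod 2) : Bf m 0 y = 0 := by
  simp [Bf]

lemma Bf_zero_right (m : ℕ) (x : Fin (2 * m + 1) → ZMod 2) : Bf m x 0 = 0 := by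
  simp [Bf]

lemma Bf_neg_left (m : ℕ) (x y : Fin (2 * m + 1) → ZMod 2) : Bf m (-x) y = -Bf m x y := by
  simp [Bf, neg_mul, Finset.sum_neg_distrib]

lemma Bf_neg_right (m : ℕ) (x y : Fin (2 * m + 1) → ZMod 2) : Bf m x (-y) = -Bf m x y := by
  simp [Bf, mul_neg, neg_mul, Finset.sum_neg_distrib]

lemma Bf_ones_left (m : ℕ) (y : Fin (2 * m + 1) → ZMod 2) :
    Bf m (fun _ => 1) y = 0 := by
  unfold Bf
  rw [Finset.sum_comm]
  apply Finset.sum_eq_zero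
  intro j _
  simp only [one_mul, ← Finset.mul_sum, colsum, mul_zero]

lemma Bf_ones_right (m : ℕ) (x : Fin (2 * m + 1) → ZMod 2) :
    Bf m x (fun _ => 1) = 0 := by
  unfold Bf
  apply Finset.sum_eq_zero
  intro i _
  simp only [mul_one, ← Finset.mul_sum, rowsum, mul_zero]

lemma Bf_rel_left (m : ℕ) (r : Fin (2 * m + 1) → ZMod 2) (hr : r ∈ relSubgroup m)
    (y : Fin (2 * m + 1) → ZMod 2) : Bf m r y = 0 := by
  induction hr using AddSubgroup.closure_induction with
  | mem a ha => rw [Set.mem_singleton_iff] at ha; rw [ha]; exact Bf_ones_left m y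
  | zero => exact Bf_zero_left m y
  | add a b _ _ ha hb => rw [Bf_add_left, ha, hb, add_zero]
  | neg a _ ha => rw [Bf_neg_left, ha, neg_zero]

lemma Bf_rel_right (m : ℕ) (x r : Fin (2 * m + 1) → ZMod 2) (hr : r ∈ relSubgroup m) :
    Bf m x r = 0 := by
  induction hr using AddSubgroup.closure_induction with
  | mem a ha => rw [Set.mem_singleton_iff] at ha; rw [ha]; exact Bf_ones_right m x
  | zero => exact Bf_zero_right m x
  | add a b _ _ ha hb => rw [Bf_add_right, ha, hb, add_zero]
  | neg a _ ha => rw [Bf_neg_right, ha, neg_zero]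

def sgn : ZMod 2 → ℤˣ := fun a => if a = 0 then 1 else -1

lemma sgn_add (a b : ZMod 2) : sgn (a + b) = sgn a * sgn b := by revert a b; decide

lemma sgn_natCast (k : ℕ) : sgn ((k : ℕ) : ZMod 2) = (-1 : ℤˣ) ^ k := by
  induction k with
  | zero => rfl
  | succ n ih =>
      rw [pow_succ, ← ih]
      rw [show ((n + 1 : ℕ) : ZMod 2) = (n : ZMod 2) + 1 by push_cast; ring]
      rw [sgn_add]
      rfl

lemma Bf_single (m : ℕ) (i j : Fin (2 * m + 1)) :
    Bf m (Pi.single i 1) (Pi.single j 1) = cmat m i j := by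
  simp [Bf, Pi.single_apply, ite_mul, mul_ite]

def sigmaQ (m : ℕ) : Am m → Am m → ℤˣ := fun a b =>
  Quotient.liftOn₂ a b (fun x y => sgn (Bf m x y)) (by
    intro x y x' y' hx hy
    have hr : -x + x' ∈ relSubgroup m := QuotientAddGroup.leftRel_apply.mp hx
    have hs : -y + y' ∈ relSubgroup m := QuotientAddGroup.leftRel_apply.mp hy
    have H : ∀ r s : Fin (2 * m + 1) → ZMod 2, r ∈ relSubgroup m → s ∈ relSubgroup m →
        Bf m (x + r) (y + s) = Bf m x y := by
      intro r s hr' hs'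
      rw [Bf_add_left, Bf_add_right, Bf_add_right,
        Bf_rel_left m _ hr', Bf_rel_left m _ hr', Bf_rel_right m _ _ hs']
      abel
    have key := H (-x + x') (-y + y') hr hs
    have ex : x + (-x + x') = x' := by abel
    have ey : y + (-y + y') = y' := by abel
    rw [ex, ey] at key
    show sgn (Bf m x y) = sgn (Bf m x' y')
    exact congrArg sgn key.symm)

lemma sigmaQ_tgen (m : ℕ) (i j : Fin (2 * m + 1)) :
    sigmaQ m (tgen m i) (tgen m j) = sgn (cmat m i j) := by
  rw [← Bf_single m i j]
  rfl

lemma sigmaQ_add_left (m : ℕ) (x y z : Am m) :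
    sigmaQ m (x + y) z = sigmaQ m x z * sigmaQ m y z := by
  induction x using QuotientAddGroup.induction_on with | H x =>
  induction y using QuotientAddGroup.induction_on with | H y =>
  induction z using QuotientAddGroup.induction_on with | H z =>
  show sgn (Bf m (x + y) z) = sgn (Bf m x z) * sgn (Bf m y z)
  rw [Bf_add_left, sgn_add]

lemma sigmaQ_add_right (m : ℕ) (x y z : Am m) :
    sigmaQ m x (y + z) = sigmaQ m x y * sigmaQ m x z := by
  induction x using QuotientAddGroup.induction_on with | H x =>
  induction y using QuotientAddGroup.induction_on with | H y =>
  induction z using QuotientAddGroup.induction_on with | H z =>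
  show sgn (Bf m x (y + z)) = sgn (Bf m x y) * sgn (Bf m x z)
  rw [Bf_add_right, sgn_add]

theorem stmt_16 (m : ℕ) (hm : 1 ≤ m) :
    ∃ σ : Am m → Am m → ℤˣ,
      (∀ x y z, σ (x + y) z = σ x z * σ y z) ∧
      (∀ x y z, σ x (y + z) = σ x y * σ x z) ∧
      (∀ i j : Fin (2 * m + 1), i < j → (j : ℕ) < 2 * m →
        σ (tgen m i) (tgen m j) = -1 ∧ σ (tgen m j) (tgen m i) = 1) ∧
      (∀ i, σ (tgen m i) (tgen m i) = (-1) ^ m) ∧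
      (∀ i : Fin (2 * m + 1), (i : ℕ) < 2 * m →
        σ (tgen m i) (tgen m (Fin.last (2 * m))) = (-1) ^ (m + (i : ℕ) + 1) ∧
        σ (tgen m (Fin.last (2 * m))) (tgen m i) = -(-1) ^ (m + (i : ℕ) + 1)) := by
  refine ⟨sigmaQ m, sigmaQ_add_left m, sigmaQ_add_right m, ?_, ?_, ?_⟩
  · intro i j hij hj
    have hij' : (i : ℕ) < (j : ℕ) := hij
    constructor
    · rw [sigmaQ_tgen]
      have : cmat m i j = 1 := by
        simp only [cmat]
        rw [if_neg (by omega : ¬ (i : ℕ) = 2 * m), if_neg (by omega : ¬ (j : ℕ) = 2 * m),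
          if_neg (Fin.ne_of_lt hij), if_pos hij]
      rw [this]; rfl
    · rw [sigmaQ_tgen]
      have : cmat m j i = 0 := by
        simp only [cmat]
        rw [if_neg (by omega : ¬ (j : ℕ) = 2 * m), if_neg (by omega : ¬ (i : ℕ) = 2 * m),
          if_neg (Fin.ne_of_gt hij), if_neg (by exact fun h => absurd (Fin.lt_def.mp h) (by omega))]
      rw [this]; rfl
  · intro i
    rw [sigmaQ_tgen]
    have : cmat m i i = (m : ZMod 2) := by
      by_cases hi : (i : ℕ) = 2 * m
      · simp [cmat, hi]
      · simp [cmat, hi]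
    rw [this, sgn_natCast]
  · intro i hi
    have hlast : ((Fin.last (2 * m) : Fin (2 * m + 1)) : ℕ) = 2 * m := rfl
    constructor
    · rw [sigmaQ_tgen]
      have : cmat m i (Fin.last (2 * m)) = ((m + (i : ℕ) + 1 : ℕ) : ZMod 2) := by
        simp only [cmat]
        rw [if_neg (by omega : ¬ (i : ℕ) = 2 * m), if_pos hlast]
        push_cast
        ring
      rw [this, sgn_natCast]
    · rw [sigmaQ_tgen]
      have : cmat m (Fin.last (2 * m)) i = ((m + (i : ℕ) : ℕ) : ZMod 2) := by
        simp only [cmat]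
        rw [if_pos hlast, if_neg (by omega : ¬ (i : ℕ) = 2 * m)]
        push_cast
        ring
      rw [this, sgn_natCast, pow_succ]
      simp
end

section
/- Let g ∈ U(3) have a row with all entries nonzero or a column with all entries nonzero, and set T₁ = iσ₁, T₂ = iσ₂, T₃ = iσ₃ (Pauli matrices). Then the complex subalgebra of M₂(ℂ) ⊗ M₂(ℂ) generated by the nine elements gᵢⱼ · (Tᵢ ⊗ Tⱼ), 1 ≤ i,j ≤ 3, is all of M₂(ℂ) ⊗ M₂(ℂ) ≅ M₄(ℂ). -/
open Kronecker

private lemma neg_kron {l m n p : Type*} (A : Matrix l m ℂ) (B : Matrix n p ℂ) :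
    (-A) ⊗ₖ B = -(A ⊗ₖ B) := by
  ext ⟨i, j⟩ ⟨k, r⟩; simp [Matrix.kroneckerMap_apply]

private lemma kron_neg {l m n p : Type*} (A : Matrix l m ℂ) (B : Matrix n p ℂ) :
    A ⊗ₖ (-B) = -(A ⊗ₖ B) := by
  ext ⟨i, j⟩ ⟨k, r⟩; simp [Matrix.kroneckerMap_apply]

private lemma Tmul (T : Fin 3 → Matrix (Fin 2) (Fin 2) ℂ)
    (h1 : T 0 = Complex.I • !![0, 1; 1, 0])
    (h2 : T 1 = Complex.I • !![0, -Complex.I; Complex.I, 0])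
    (h3 : T 2 = Complex.I • !![1, 0; 0, -1]) :
    (∀ i, T i * T i = -1) ∧ T 0 * T 1 = -(T 2) ∧ T 1 * T 2 = -(T 0) ∧ T 2 * T 0 = -(T 1) := by
  refine ⟨fun i => ?_, ?_, ?_, ?_⟩
  · fin_cases i <;>
    · ext a b
      fin_cases a <;> fin_cases b <;>
        simp [h1, h2, h3, Matrix.mul_apply, Fin.sum_univ_two, Matrix.one_apply] <;> ring_nf <;>
        simp [Complex.I_sq] <;> ring
  all_goals
    ext a b
    fin_cases a <;> fin_cases b <;>
      simp [h1, h2, h3, Matrix.mul_apply, Fin.sum_univ_two] <;> ring_nf <;>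
      simp [Complex.I_sq] <;> ring

private lemma Tdecomp (T : Fin 3 → Matrix (Fin 2) (Fin 2) ℂ)
    (h1 : T 0 = Complex.I • !![0, 1; 1, 0])
    (h2 : T 1 = Complex.I • !![0, -Complex.I; Complex.I, 0])
    (h3 : T 2 = Complex.I • !![1, 0; 0, -1]) (X : Matrix (Fin 2) (Fin 2) ℂ) :
    ∃ a b c d : ℂ, X = a • (1 : Matrix (Fin 2) (Fin 2) ℂ) + b • T 0 + c • T 1 + d • T 2 := by
  refine ⟨(X 0 0 + X 1 1)/2, -Complex.I*(X 0 1 + X 1 0)/2, (X 0 1 - X 1 0)/2,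
    -Complex.I*(X 0 0 - X 1 1)/2, ?_⟩
  ext a b
  fin_cases a <;> fin_cases b <;>
    simp [h1, h2, h3, Matrix.one_apply] <;> ring_nf <;> simp [Complex.I_sq] <;> ring

private lemma stdBasis_kron (a b c d : Fin 2) :
    Matrix.single ((a, c) : Fin 2 × Fin 2) (b, d) (1 : ℂ) =
      (Matrix.single a b 1) ⊗ₖ (Matrix.single c d 1) := by
  ext ⟨x1, x2⟩ ⟨y1, y2⟩
  simp only [Matrix.single, Matrix.kroneckerMap_apply, Matrix.of_apply, Prod.mk.injEq]
  by_cases hax : a = x1 <;> by_cases hcx : c = x2 <;> by_cases hby : b = y1 <;>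
    by_cases hdy : d = y2 <;> simp [hax, hcx, hby, hdy]

theorem stmt_17 (T : Fin 3 → Matrix (Fin 2) (Fin 2) ℂ)
    (h1 : T 0 = Complex.I • !![0, 1; 1, 0])
    (h2 : T 1 = Complex.I • !![0, -Complex.I; Complex.I, 0])
    (h3 : T 2 = Complex.I • !![1, 0; 0, -1])
    (g : Matrix (Fin 3) (Fin 3) ℂ) (hg : g ∈ Matrix.unitaryGroup (Fin 3) ℂ)
    (hreg : (∃ i, ∀ j, g i j ≠ 0) ∨ (∃ j, ∀ i, g i j ≠ 0)) :
    Algebra.adjoin ℂ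
        {x : Matrix (Fin 2 × Fin 2) (Fin 2 × Fin 2) ℂ | ∃ i j, x = g i j • (T i ⊗ₖ T j)} =
      ⊤ := by
  set A := Algebra.adjoin ℂ
      {x : Matrix (Fin 2 × Fin 2) (Fin 2 × Fin 2) ℂ | ∃ i j, x = g i j • (T i ⊗ₖ T j)} with hA
  have hgen : ∀ i j, g i j • (T i ⊗ₖ T j) ∈ A := fun i j =>
    Algebra.subset_adjoin ⟨i, j, rfl⟩
  have hdiv : ∀ {c : ℂ} {x : Matrix (Fin 2 × Fin 2) (Fin 2 × Fin 2) ℂ},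
      c ≠ 0 → c • x ∈ A → x ∈ A := by
    intro c x hc hx
    have := A.smul_mem hx c⁻¹
    rwa [smul_smul, inv_mul_cancel₀ hc, one_smul] at this
  have hT : ∀ i j, g i j ≠ 0 → T i ⊗ₖ T j ∈ A := fun i j h => hdiv h (hgen i j)
  obtain ⟨hsq, h01, h12, h20⟩ := Tmul T h1 h2 h3
  have hrow : ∀ k, ∃ j, g k j ≠ 0 := by
    intro k
    by_contra h
    push_neg at h
    have hu : g * star g = 1 := Matrix.mem_unitaryGroup_iff.mp hg
    have := congrFun (congrFun hu k) k
    simp [Matrix.mul_apply, Matrix.one_apply, h] at this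
  have hcol : ∀ j, ∃ k, g k j ≠ 0 := by
    intro j
    by_contra h
    push_neg at h
    have hu : star g * g = 1 := Matrix.mem_unitaryGroup_iff'.mp hg
    have := congrFun (congrFun hu j) j
    simp [Matrix.mul_apply, Matrix.one_apply, h] at this
  have key : (∀ m, (1 : Matrix (Fin 2) (Fin 2) ℂ) ⊗ₖ T m ∈ A) ∧
      (∀ k, T k ⊗ₖ (1 : Matrix (Fin 2) (Fin 2) ℂ) ∈ A) := by
    rcases hreg with ⟨i, hi⟩ | ⟨j, hj⟩
    · have hR : ∀ m, (1 : Matrix (Fin 2) (Fin 2) ℂ) ⊗ₖ T m ∈ A := by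
        intro m
        fin_cases m
        · have := A.mul_mem (hT i 1 (hi 1)) (hT i 2 (hi 2))
          rwa [← Matrix.mul_kronecker_mul, hsq, h12, neg_kron, kron_neg, neg_neg] at this
        · have := A.mul_mem (hT i 2 (hi 2)) (hT i 0 (hi 0))
          rwa [← Matrix.mul_kronecker_mul, hsq, h20, neg_kron, kron_neg, neg_neg] at this
        · have := A.mul_mem (hT i 0 (hi 0)) (hT i 1 (hi 1))
          rwa [← Matrix.mul_kronecker_mul, hsq, h01, neg_kron, kron_neg, neg_neg] at this
      refine ⟨hR, fun k => ?_⟩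
      obtain ⟨j, hj⟩ := hrow k
      have := A.mul_mem (hR j) (hT k j hj)
      rw [← Matrix.mul_kronecker_mul, one_mul, hsq j, kron_neg] at this
      exact (neg_mem_iff).mp this
    · have hL : ∀ k, T k ⊗ₖ (1 : Matrix (Fin 2) (Fin 2) ℂ) ∈ A := by
        intro k
        fin_cases k
        · have := A.mul_mem (hT 1 j (hj 1)) (hT 2 j (hj 2))
          rwa [← Matrix.mul_kronecker_mul, hsq, h12, neg_kron, kron_neg, neg_neg] at this
        · have := A.mul_mem (hT 2 j (hj 2)) (hT 0 j (hj 0))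
          rwa [← Matrix.mul_kronecker_mul, hsq, h20, neg_kron, kron_neg, neg_neg] at this
        · have := A.mul_mem (hT 0 j (hj 0)) (hT 1 j (hj 1))
          rwa [← Matrix.mul_kronecker_mul, hsq, h01, neg_kron, kron_neg, neg_neg] at this
      refine ⟨fun m => ?_, hL⟩
      obtain ⟨k, hk⟩ := hcol m
      have := A.mul_mem (hL k) (hT k m hk)
      rw [← Matrix.mul_kronecker_mul, one_mul, hsq k, neg_kron] at this
      exact (neg_mem_iff).mp this
  obtain ⟨hR, hL⟩ := key
  have h1A : ((1 : Matrix (Fin 2) (Fin 2) ℂ) ⊗ₖ (1 : Matrix (Fin 2) (Fin 2) ℂ)) ∈ A := by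
    rw [Matrix.one_kronecker_one]; exact A.one_mem
  have hXL : ∀ X : Matrix (Fin 2) (Fin 2) ℂ, X ⊗ₖ (1 : Matrix (Fin 2) (Fin 2) ℂ) ∈ A := by
    intro X
    obtain ⟨a, b, c, d, hX⟩ := Tdecomp T h1 h2 h3 X
    rw [hX, Matrix.add_kronecker, Matrix.add_kronecker, Matrix.add_kronecker,
      Matrix.smul_kronecker, Matrix.smul_kronecker, Matrix.smul_kronecker,
      Matrix.smul_kronecker]
    exact add_mem (add_mem (add_mem (A.smul_mem h1A a) (A.smul_mem (hL 0) b))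
      (A.smul_mem (hL 1) c)) (A.smul_mem (hL 2) d)
  have hYR : ∀ Y : Matrix (Fin 2) (Fin 2) ℂ, (1 : Matrix (Fin 2) (Fin 2) ℂ) ⊗ₖ Y ∈ A := by
    intro Y
    obtain ⟨a, b, c, d, hY⟩ := Tdecomp T h1 h2 h3 Y
    rw [hY, Matrix.kronecker_add, Matrix.kronecker_add, Matrix.kronecker_add,
      Matrix.kronecker_smul, Matrix.kronecker_smul, Matrix.kronecker_smul,
      Matrix.kronecker_smul]
    exact add_mem (add_mem (add_mem (A.smul_mem h1A a) (A.smul_mem (hR 0) b))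
      (A.smul_mem (hR 1) c)) (A.smul_mem (hR 2) d)
  have hXY : ∀ X Y : Matrix (Fin 2) (Fin 2) ℂ, X ⊗ₖ Y ∈ A := by
    intro X Y
    have := A.mul_mem (hXL X) (hYR Y)
    rwa [← Matrix.mul_kronecker_mul, mul_one, one_mul] at this
  rw [eq_top_iff]
  intro x _
  rw [Matrix.matrix_eq_sum_single x]
  refine Subalgebra.sum_mem _ fun p _ => Subalgebra.sum_mem _ fun q _ => ?_
  have : Matrix.single p q (x p q) = x p q • Matrix.single p q (1 : ℂ) := by
    simp
  rw [this]
  apply A.smul_mem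
  obtain ⟨a, c⟩ := p
  obtain ⟨b, d⟩ := q
  rw [stdBasis_kron]
  exact hXY _ _
end

section
/- Let A be an associative unital ℂ-algebra containing elements uᵢⱼ (1 ≤ i,j ≤ n) satisfying uᵢⱼuₖₗ = (-1)^{δᵢₖ+δⱼₗ} uₖₗuᵢⱼ for all i,j,k,l. Then Σ_{σ ∈ Sₙ} u_{1σ(1)} u_{2σ(2)} ⋯ u_{nσ(n)} = Σ_{σ ∈ Sₙ} u_{σ(1)1} u_{σ(2)2} ⋯ u_{σ(n)n}. -/
theorem stmt_18 (A : Type*) [Ring A] [Algebra ℂ A] (n : ℕ)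
    (u : Fin n → Fin n → A)
    (hrel : ∀ i j k l, u i j * u k l =
      ((-1 : ℤ) ^ ((if i = k then 1 else 0) + (if j = l then 1 else 0) : ℕ)) •
        (u k l * u i j)) :
    ∑ σ : Equiv.Perm (Fin n), ((List.finRange n).map (fun i => u i (σ i))).prod =
      ∑ σ : Equiv.Perm (Fin n), ((List.finRange n).map (fun i => u (σ i) i)).prod := by
  have key : ∀ σ : Equiv.Perm (Fin n),
      ((List.finRange n).map (fun i => u i (σ i))).prod =
      ((List.finRange n).map (fun i => u (σ⁻¹ i) i)).prod := by
    intro σ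
    have hcomm : ∀ a b : Fin n, a ≠ b → Commute (u a (σ a)) (u b (σ b)) := by
      intro a b hab
      have h := hrel a (σ a) b (σ b)
      simp [hab, σ.injective.ne hab] at h
      exact h
    have hmap : ((List.finRange n).map (fun i => u (σ⁻¹ i) i)) =
        (((List.finRange n).map ⇑σ⁻¹).map (fun j => u j (σ j))) := by
      simp [List.map_map, Function.comp]
    have hperm : (List.finRange n).Perm ((List.finRange n).map ⇑σ⁻¹) := by
      apply List.perm_of_nodup_nodup_toFinset_eq (List.nodup_finRange n)
      · exact (List.nodup_finRange n).map σ⁻¹.injective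
      · ext x; simpa using ⟨σ x, by simp⟩
    refine List.Perm.prod_eq' ?_ ?_
    · rw [hmap]; exact hperm.map _
    · exact (List.pairwise_map).mpr ((List.nodup_finRange n).imp (fun h => hcomm _ _ h))
  calc ∑ σ : Equiv.Perm (Fin n), ((List.finRange n).map (fun i => u i (σ i))).prod
      = ∑ σ : Equiv.Perm (Fin n), ((List.finRange n).map (fun i => u (σ⁻¹ i) i)).prod := by
        exact Finset.sum_congr rfl (fun σ _ => key σ)
    _ = ∑ σ : Equiv.Perm (Fin n), ((List.finRange n).map (fun i => u (σ i) i)).prod := by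
        exact Fintype.sum_equiv (Equiv.inv (Equiv.Perm (Fin n))) _ _ (fun σ => rfl)
end

section
/- Let A be a unital *-algebra containing elements uᵢⱼ (1 ≤ i,j ≤ n) such that the matrix u = (uᵢⱼ) is unitary (u u* = I = u* u in Mₙ(A)) and uᵢⱼuₖₗ = (-1)^{δᵢₖ+δⱼₗ} uₖₗuᵢⱼ for all i,j,k,l. Then uᵢⱼ* uₖₗ = (-1)^{δᵢₖ+δⱼₗ} uₖₗ uᵢⱼ* for all i,j,k,l. -/
theorem stmt_19 (A : Type*) [Ring A] [StarRing A] (n : ℕ)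
    (u : Fin n → Fin n → A)
    (hunit₁ : ∀ i j, ∑ k, u i k * star (u j k) = if i = j then 1 else 0)
    (hunit₂ : ∀ i j, ∑ k, star (u k i) * u k j = if i = j then 1 else 0)
    (hrel : ∀ i j k l, u i j * u k l =
      ((-1 : ℤ) ^ ((if i = k then 1 else 0) + (if j = l then 1 else 0) : ℕ)) •
        (u k l * u i j)) :
    ∀ i j k l, star (u i j) * u k l =
      ((-1 : ℤ) ^ ((if i = k then 1 else 0) + (if j = l then 1 else 0) : ℕ)) •
        (u k l * star (u i j)) := by
  intro i j k l
  set e : Fin n → Fin n → ℤ := fun a b => (-1 : ℤ) ^ ((if a = b then 1 else 0 : ℕ)) with he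
  have hesq : ∀ a b, e a b * e a b = 1 := by
    intro a b; simp only [he]; split <;> norm_num
  have key : ∀ j' : Fin n,
      ∑ m, e m k • (star (u m j) * u k l * u m j') =
        e j' l • ((if j = j' then (1 : A) else 0) * u k l) := by
    intro j'
    have h1 : ∑ m, star (u m j) * u m j' * u k l = (if j = j' then (1 : A) else 0) * u k l := by
      rw [← Finset.sum_mul, hunit₂]
    calc ∑ m, e m k • (star (u m j) * u k l * u m j')
        = e j' l • ∑ m, star (u m j) * u m j' * u k l := by
          rw [Finset.smul_sum]
          refine Finset.sum_congr rfl fun m _ => ?_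
          conv_rhs => rw [mul_assoc (star (u m j)), hrel m j' k l, pow_add]
          conv_rhs => rw [mul_smul_comm, smul_smul]
          rw [← mul_assoc (star (u m j))]
          congr 1
          show e m k = e j' l * (e m k * e j' l)
          rw [mul_comm (e m k), ← mul_assoc, hesq, one_mul]
      _ = _ := by rw [h1]
  have final : ∑ j', (∑ m, e m k • (star (u m j) * u k l * u m j')) * star (u i j') =
      ∑ j', (e j' l • ((if j = j' then (1 : A) else 0) * u k l)) * star (u i j') :=
    Finset.sum_congr rfl fun j' _ => by rw [key j']
  have hL : ∑ j', (∑ m, e m k • (star (u m j) * u k l * u m j')) * star (u i j') =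
      e i k • (star (u i j) * u k l) := by
    have h2 : ∀ j', (∑ m, e m k • (star (u m j) * u k l * u m j')) * star (u i j') =
        ∑ m, e m k • (star (u m j) * u k l * (u m j' * star (u i j'))) := by
      intro j'
      rw [Finset.sum_mul]
      refine Finset.sum_congr rfl fun m _ => ?_
      rw [smul_mul_assoc, mul_assoc]
    rw [Finset.sum_congr rfl fun j' _ => h2 j', Finset.sum_comm]
    have h3 : ∀ m, ∑ j', e m k • (star (u m j) * u k l * (u m j' * star (u i j'))) =
        e m k • (star (u m j) * u k l * (if m = i then (1 : A) else 0)) := by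
      intro m
      rw [← Finset.smul_sum, ← Finset.mul_sum, hunit₁ m i]
    rw [Finset.sum_congr rfl fun m _ => h3 m]
    have h4 : ∀ m, e m k • (star (u m j) * u k l * (if m = i then (1 : A) else 0)) =
        if m = i then e m k • (star (u m j) * u k l) else 0 := by
      intro m; split <;> simp
    rw [Finset.sum_congr rfl fun m _ => h4 m, Finset.sum_ite_eq' Finset.univ i
      (fun m => e m k • (star (u m j) * u k l))]
    simp
  have hR : ∑ j', (e j' l • ((if j = j' then (1 : A) else 0) * u k l)) * star (u i j') =
      e j l • (u k l * star (u i j)) := by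
    have h5 : ∀ j', (e j' l • ((if j = j' then (1 : A) else 0) * u k l)) * star (u i j') =
        if j = j' then e j' l • (u k l * star (u i j')) else 0 := by
      intro j'; split <;> simp [smul_mul_assoc, mul_assoc]
    rw [Finset.sum_congr rfl fun j' _ => h5 j', Finset.sum_ite_eq Finset.univ j
      (fun j' => e j' l • (u k l * star (u i j')))]
    simp
  have main : e i k • (star (u i j) * u k l) = e j l • (u k l * star (u i j)) := by
    rw [← hL, final, hR]
  have := congrArg (fun x => e i k • x) main
  simp only [smul_smul, hesq, one_smul] at this
  rw [this, pow_add]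
end
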